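/- Let γ : [0,1] → ℝ^{1+n} be a future-directed causal curve, and suppose that there exist 0 ≤ s₁ < s₂ ≤ 1 such that γ'(s) is timelike future-directed for almost every s ∈ [s₁, s₂] (i.e. γ restricted to [s₁,s₂] is timelike). Then γ(1) ∈ I^+(γ(0)), i.e. there exists a future-directed timelike curve from γ(0) to γ(1). -/

import Mathlib

open Set MeasureTheory Filter Topology
open scoped RealInnerProductSpace

noncomputable section

/-- Minkowski space-time `ℝ^{1+n} = ℝ × ℝ^n`. -/
abbrev Mink (n : ℕ) : Type := ℝ × EuclideanSpace ℝ (Fin n)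

/-- A vector is timelike future-directed if `v⁰ > |v⃗|`. -/
def timelikeFD {n : ℕ} (v : Mink n) : Prop := ‖v.2‖ < v.1

/-- A vector is causal future-directed if `v ≠ 0` and `v⁰ ≥ |v⃗|`. -/
def causalFD {n : ℕ} (v : Mink n) : Prop := v ≠ 0 ∧ ‖v.2‖ ≤ v.1

/-- A vector is null future-directed if `v ≠ 0` and `v⁰ = |v⃗|`. -/
def nullFD {n : ℕ} (v : Mink n) : Prop := v ≠ 0 ∧ ‖v.2‖ = v.1

/-- A vector is causal past-directed if `-v` is causal future-directed. -/
def causalPD {n : ℕ} (v : Mink n) : Prop := causalFD (-v)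

/-- The Minkowski bilinear form `η(x,y) = -x⁰y⁰ + ⟨x⃗,y⃗⟩`. -/
def minkBF {n : ℕ} (x y : Mink n) : ℝ := -(x.1 * y.1) + ⟪x.2, y.2⟫

/-- The Euclidean norm on `ℝ^{1+n}`. -/
def eNorm {n : ℕ} (v : Mink n) : ℝ := Real.sqrt (v.1 ^ 2 + ‖v.2‖ ^ 2)

/-- A future-directed causal curve defined on `S ⊆ ℝ`: locally Lipschitz, with
almost-everywhere derivative causal future-directed. -/
def IsCausalCurveOn {n : ℕ} (γ : ℝ → Mink n) (S : Set ℝ) : Prop :=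
  (∀ a b : ℝ, Icc a b ⊆ S → ∃ K : NNReal, LipschitzOnWith K γ (Icc a b)) ∧
  (∀ᵐ s ∂(volume.restrict S), ∃ v : Mink n, HasDerivWithinAt γ v S s ∧ causalFD v)

/-- A future-directed timelike curve defined on `S ⊆ ℝ`. -/
def IsTimelikeCurveOn {n : ℕ} (γ : ℝ → Mink n) (S : Set ℝ) : Prop :=
  (∀ a b : ℝ, Icc a b ⊆ S → ∃ K : NNReal, LipschitzOnWith K γ (Icc a b)) ∧
  (∀ᵐ s ∂(volume.restrict S), ∃ v : Mink n, HasDerivWithinAt γ v S s ∧ timelikeFD v)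

/-- A past-directed causal curve defined on `S ⊆ ℝ`. -/
def IsPastCausalCurveOn {n : ℕ} (γ : ℝ → Mink n) (S : Set ℝ) : Prop :=
  (∀ a b : ℝ, Icc a b ⊆ S → ∃ K : NNReal, LipschitzOnWith K γ (Icc a b)) ∧
  (∀ᵐ s ∂(volume.restrict S), ∃ v : Mink n, HasDerivWithinAt γ v S s ∧ causalPD v)

/-- `chron p q`: there is a future-directed timelike curve from `p` to `q`. -/
def chron {n : ℕ} (p q : Mink n) : Prop :=
  ∃ (a b : ℝ) (γ : ℝ → Mink n), a < b ∧ IsTimelikeCurveOn γ (Icc a b) ∧ γ a = p ∧ γ b = q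

/-- `caus p q`: `q = p`, or there is a future-directed causal curve from `p` to `q`. -/
def caus {n : ℕ} (p q : Mink n) : Prop :=
  p = q ∨ ∃ (a b : ℝ) (γ : ℝ → Mink n), a < b ∧ IsCausalCurveOn γ (Icc a b) ∧ γ a = p ∧ γ b = q

/-- `causPast p q`: `q = p`, or there is a past-directed causal curve from `p` to `q`. -/
def causPast {n : ℕ} (p q : Mink n) : Prop :=
  p = q ∨ ∃ (a b : ℝ) (γ : ℝ → Mink n), a < b ∧ IsPastCausalCurveOn γ (Icc a b) ∧ γ a = p ∧ γ b = q

/-- The timelike future `I⁺(U)`. -/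
def Iplus {n : ℕ} (U : Set (Mink n)) : Set (Mink n) := {q | ∃ p ∈ U, chron p q}

/-- The causal future `J⁺(U)`. -/
def Jplus {n : ℕ} (U : Set (Mink n)) : Set (Mink n) := {q | ∃ p ∈ U, caus p q}

/-- The causal past `J⁻(U)`. -/
def Jminus {n : ℕ} (U : Set (Mink n)) : Set (Mink n) := {q | ∃ p ∈ U, causPast p q}

/-- An inextendible future-directed timelike curve: defined on all of `ℝ`, locally
Lipschitz, parameterized by Euclidean arclength, with a.e. timelike future derivative. -/
def IsInextTimelike {n : ℕ} (γ : ℝ → Mink n) : Prop :=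
  LocallyLipschitz γ ∧
  ∀ᵐ s : ℝ, ∃ v : Mink n, HasDerivAt γ v s ∧ timelikeFD v ∧ eNorm v = 1


/-- Key monotonicity lemma: a Lipschitz function with a.e. nonnegative lower right
derivative (in a weak sense) is nondecreasing. -/
lemma key_mono (g : ℝ → ℝ) (a b : ℝ) (hab : a ≤ b) (K : ℝ) (hK : 0 ≤ K)
    (hgl : ∀ x ∈ Icc a b, ∀ y ∈ Icc a b, |g x - g y| ≤ K * |x - y|)
    (hd : ∀ᵐ s ∂(volume.restrict (Ico a b)), ∀ ε : ℝ, 0 < ε →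
      ∀ᶠ u in 𝓝[>] s, u ∈ Icc a b → -(ε * (u - s)) ≤ g u - g s) :
    g a ≤ g b := by
  have gcont : ContinuousOn g (Icc a b) := by
    refine (LipschitzOnWith.of_dist_le_mul (K := ⟨K, hK⟩) fun x hx y hy => ?_).continuousOn
    rw [Real.dist_eq, Real.dist_eq]; exact hgl x hx y hy
  set P : ℝ → Prop := fun s => ∀ ε : ℝ, 0 < ε →
      ∀ᶠ u in 𝓝[>] s, u ∈ Icc a b → -(ε * (u - s)) ≤ g u - g s with hP
  have hN : volume ({s | ¬ P s} ∩ Ico a b) = 0 := by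
    have := ae_iff.mp hd
    rwa [Measure.restrict_apply' measurableSet_Ico] at this
  refine le_of_forall_pos_le_add fun ε' hε' => ?_
  set D : ℝ := (b - a) + K + 1 with hD
  have hDpos : 0 < D := by linarith
  set ε : ℝ := ε' / D with hεdef
  have hε : 0 < ε := div_pos hε' hDpos
  obtain ⟨U, hUsup, hUopen, hUvol⟩ := Set.exists_isOpen_lt_of_lt _ (ENNReal.ofReal ε)
    (by rw [hN]; exact ENNReal.ofReal_pos.2 hε)
  have hfin : ∀ t : ℝ, volume (U ∩ Icc a t) ≠ ⊤ := fun t =>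
    (lt_of_le_of_lt (measure_mono inter_subset_left) (hUvol.trans ENNReal.ofReal_lt_top)).ne
  set m : ℝ → ℝ := fun t => (volume (U ∩ Icc a t)).toReal with hm
  have hmmono : ∀ {t u : ℝ}, t ≤ u → m t ≤ m u := fun {t u} h =>
    ENNReal.toReal_mono (hfin u) (measure_mono (inter_subset_inter_right _ (Icc_subset_Icc_right h)))
  have hm0 : ∀ t, 0 ≤ m t := fun t => ENNReal.toReal_nonneg
  have hmb : m b ≤ ε := by
    have h1 : volume (U ∩ Icc a b) ≤ ENNReal.ofReal ε :=
      le_of_lt (lt_of_le_of_lt (measure_mono inter_subset_left) hUvol)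
    calc m b ≤ (ENNReal.ofReal ε).toReal := ENNReal.toReal_mono ENNReal.ofReal_ne_top h1
      _ = ε := ENNReal.toReal_ofReal hε.le
  have hmlip : ∀ {t u : ℝ}, t ≤ u → m u ≤ m t + (u - t) := by
    intro t u h
    have hsub : U ∩ Icc a u ⊆ (U ∩ Icc a t) ∪ Ioc t u := by
      rintro w ⟨hw, hwa, hwu⟩
      rcases le_or_gt w t with h' | h'
      · exact Or.inl ⟨hw, hwa, h'⟩
      · exact Or.inr ⟨h', hwu⟩
    have hle := (measure_mono hsub).trans (measure_union_le (μ := volume) _ _)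
    rw [Real.volume_Ioc] at hle
    calc m u ≤ (volume (U ∩ Icc a t) + ENNReal.ofReal (u - t)).toReal :=
          ENNReal.toReal_mono (ENNReal.add_ne_top.2 ⟨hfin t, ENNReal.ofReal_ne_top⟩) hle
      _ = m t + (u - t) := by
          rw [ENNReal.toReal_add (hfin t) ENNReal.ofReal_ne_top,
            ENNReal.toReal_ofReal (by linarith)]
  have hmcont : Continuous m := by
    refine (LipschitzWith.of_dist_le_mul (K := 1) fun x y => ?_).continuous
    rw [NNReal.coe_one, one_mul, Real.dist_eq, Real.dist_eq]
    rcases le_total x y with h | h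
    · have h1 := hmlip h; have h2 := hmmono h
      rw [abs_of_nonpos (by linarith), abs_of_nonpos (by linarith)]; linarith
    · have h1 := hmlip h; have h2 := hmmono h
      rw [abs_of_nonneg (by linarith), abs_of_nonneg (by linarith)]; linarith
  set S : Set ℝ := {t | -(ε * (t - a)) - (K + 1) * m t ≤ g t - g a} with hS
  have hScl : IsClosed (S ∩ Icc a b) := by
    have hc : ContinuousOn (fun t => g t - g a + ε * (t - a) + (K + 1) * m t) (Icc a b) :=
      ((gcont.sub continuousOn_const).add
        (continuousOn_const.mul ((continuous_id.sub continuous_const).continuousOn))).add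
        (continuousOn_const.mul hmcont.continuousOn)
    have heq : S ∩ Icc a b =
        Icc a b ∩ (fun t => g t - g a + ε * (t - a) + (K + 1) * m t) ⁻¹' (Ici 0) := by
      ext t
      simp only [hS, mem_inter_iff, mem_setOf_eq, mem_preimage, mem_Ici]
      constructor
      · rintro ⟨h1, h2⟩; exact ⟨h2, by linarith⟩
      · rintro ⟨h1, h2⟩; exact ⟨by linarith, h1⟩
    rw [heq]
    exact hc.preimage_isClosed_of_isClosed isClosed_Icc isClosed_Ici
  have hmem : Icc a b ⊆ S := by
    apply hScl.Icc_subset_of_forall_exists_gt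
    · show -(ε * (a - a)) - (K + 1) * m a ≤ g a - g a
      have := hm0 a
      nlinarith
    · rintro x ⟨hxS, hxab⟩ y hy
      by_cases hxU : x ∈ U
      · obtain ⟨r, hr, hball⟩ := Metric.isOpen_iff.mp hUopen x hxU
        set u : ℝ := min (min y b) (x + r / 2) with hu
        have hxu : x < u := lt_min (lt_min hy hxab.2) (by linarith)
        have hub : u ≤ b := (min_le_left _ _).trans (min_le_right _ _)
        have huy : u ≤ y := (min_le_left _ _).trans (min_le_left _ _)
        have hua : a ≤ u := hxab.1.trans hxu.le
        have hIocU : Ioc x u ⊆ U := by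
          intro w hw
          apply hball
          rw [Metric.mem_ball, Real.dist_eq, abs_of_pos (sub_pos.2 hw.1)]
          have : w ≤ x + r / 2 := hw.2.trans (min_le_right _ _)
          linarith
        have hdisj : Disjoint (U ∩ Icc a x) (Ioc x u) := by
          rw [Set.disjoint_left]
          rintro w ⟨_, _, hwx⟩ hw
          exact absurd hw.1 (not_lt.2 hwx)
        have hmeas : volume (U ∩ Icc a x) + ENNReal.ofReal (u - x) ≤ volume (U ∩ Icc a u) := by
          rw [← Real.volume_Ioc, ← measure_union hdisj measurableSet_Ioc]
          apply measure_mono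
          rintro w (⟨hw1, hw2, hw3⟩ | hw)
          · exact ⟨hw1, hw2, hw3.trans hxu.le⟩
          · exact ⟨hIocU hw, hxab.1.trans hw.1.le, hw.2⟩
        have hmx : m x + (u - x) ≤ m u := by
          have h5 := ENNReal.toReal_mono (hfin u) hmeas
          rwa [ENNReal.toReal_add (hfin x) ENNReal.ofReal_ne_top,
            ENNReal.toReal_ofReal (by linarith)] at h5
        have hgux : -(K * (u - x)) ≤ g u - g x := by
          have h6 := hgl u ⟨hua, hub⟩ x ⟨hxab.1, hxab.2.le⟩
          rw [abs_le, abs_of_pos (by linarith : (0:ℝ) < u - x)] at h6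
          linarith [h6.1]
        refine ⟨u, ?_, hxu, huy⟩
        show -(ε * (u - a)) - (K + 1) * m u ≤ g u - g a
        have hxmem : -(ε * (x - a)) - (K + 1) * m x ≤ g x - g a := hxS
        have h7 : (K + 1) * (u - x) ≤ (K + 1) * (m u - m x) :=
          mul_le_mul_of_nonneg_left (by linarith) (by linarith)
        have h8 : 0 ≤ ε * (u - x) := mul_nonneg hε.le (by linarith)
        nlinarith
      · have hxP : P x := by
          by_contra hcon
          exact hxU (hUsup ⟨hcon, hxab⟩)
        have hev := hxP ε hε
        have hIoc : Ioc x (min y b) ∈ 𝓝[>] x :=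
          Ioc_mem_nhdsGT (lt_min hy hxab.2)
        obtain ⟨u, huP, hu⟩ := (hev.and (Filter.eventually_of_mem hIoc fun _ h => h)).exists
        have huab : u ∈ Icc a b := ⟨hxab.1.trans hu.1.le, hu.2.trans (min_le_right _ _)⟩
        have hg := huP huab
        refine ⟨u, ?_, hu.1, hu.2.trans (min_le_left _ _)⟩
        show -(ε * (u - a)) - (K + 1) * m u ≤ g u - g a
        have hxmem : -(ε * (x - a)) - (K + 1) * m x ≤ g x - g a := hxS
        have h5 : (K + 1) * m x ≤ (K + 1) * m u :=
          mul_le_mul_of_nonneg_left (hmmono hu.1.le) (by linarith)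
        have h6 : a ≤ x := hxab.1
        have h8 : 0 ≤ ε * (u - x) := mul_nonneg hε.le (by linarith [hu.1])
        nlinarith
  have hb : -(ε * (b - a)) - (K + 1) * m b ≤ g b - g a := hmem ⟨hab, le_rfl⟩
  have h6 : (K + 1) * m b ≤ (K + 1) * ε := mul_le_mul_of_nonneg_left hmb (by linarith)
  have h7 : ε * (b - a) + (K + 1) * ε = ε' := by
    rw [hεdef]; field_simp; ring
  linarith

/-- Lower bound for right difference quotients of `t ↦ γ(t)⁰ - |γ⃗(t) - c|` at a point of
differentiability of `γ`. -/
lemma deriv_lower {n : ℕ} {γ : ℝ → Mink n} {c : EuclideanSpace ℝ (Fin n)} {g : ℝ → ℝ}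
    (hg : ∀ x, g x = (γ x).1 - ‖(γ x).2 - c‖) {s : ℝ} {v : Mink n}
    (hder : HasDerivWithinAt γ v (Icc 0 1) s) {ε : ℝ} (hε : 0 < ε) :
    ∀ᶠ u in 𝓝[>] s, u ∈ Icc (0:ℝ) 1 → (v.1 - ‖v.2‖ - ε) * (u - s) ≤ g u - g s := by
  have h1 := hasDerivWithinAt_iff_tendsto_slope.mp hder
  have hq : Tendsto (fun u => (slope γ s u).1 - ‖(slope γ s u).2‖)
      (𝓝[Icc 0 1 \ {s}] s) (𝓝 (v.1 - ‖v.2‖)) :=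
    ((continuous_fst.sub continuous_snd.norm).tendsto v).comp h1
  have hev := hq.eventually_const_lt (show v.1 - ‖v.2‖ - ε < v.1 - ‖v.2‖ by linarith)
  rw [eventually_nhdsWithin_iff] at hev
  filter_upwards [hev.filter_mono nhdsWithin_le_nhds, self_mem_nhdsWithin] with u hu hus humem
  have hus' : s < u := hus
  have hupos : (0:ℝ) < u - s := sub_pos.2 hus'
  have h3 := hu ⟨humem, fun h => absurd (mem_singleton_iff.mp h) (ne_of_gt hus')⟩
  have hslope : slope γ s u = (u - s)⁻¹ • (γ u - γ s) := slope_def_module γ s u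
  have hfst : (slope γ s u).1 = (u - s)⁻¹ * ((γ u).1 - (γ s).1) := by
    rw [hslope]; simp [Prod.smul_fst]
  have hsnd : ‖(slope γ s u).2‖ = (u - s)⁻¹ * ‖(γ u).2 - (γ s).2‖ := by
    rw [hslope]
    have h2 : ((u - s)⁻¹ • (γ u - γ s)).2 = (u - s)⁻¹ • ((γ u).2 - (γ s).2) := rfl
    rw [h2, norm_smul, Real.norm_eq_abs, abs_of_pos (inv_pos.2 hupos)]
  rw [hfst, hsnd, ← mul_sub] at h3
  have h4 : (v.1 - ‖v.2‖ - ε) * (u - s) ≤ ((γ u).1 - (γ s).1) - ‖(γ u).2 - (γ s).2‖ := by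
    have h5 := mul_le_mul_of_nonneg_left h3.le hupos.le
    rwa [← mul_assoc, mul_inv_cancel₀ hupos.ne', one_mul, mul_comm] at h5
  have h6 : ‖(γ u).2 - c‖ - ‖(γ s).2 - c‖ ≤ ‖(γ u).2 - (γ s).2‖ := by
    have := norm_sub_norm_le ((γ u).2 - c) ((γ s).2 - c)
    rwa [sub_sub_sub_cancel_right] at this
  rw [hg u, hg s]
  linarith

/-- a future-directed causal curve which is timelike on some parameter
subinterval can be replaced by a timelike curve between its endpoints:
`γ(1) ∈ I⁺(γ(0))`. -/
theorem causal_curve_with_timelike_piece_pushup (n : ℕ) (γ : ℝ → Mink n) (s₁ s₂ : ℝ)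
    (h1 : 0 ≤ s₁) (h12 : s₁ < s₂) (h2 : s₂ ≤ 1)
    (hγ : IsCausalCurveOn γ (Icc 0 1))
    (ht : ∀ᵐ s ∂(volume.restrict (Icc s₁ s₂)),
      ∃ v : Mink n, HasDerivWithinAt γ v (Icc 0 1) s ∧ timelikeFD v) :
    γ 1 ∈ Iplus ({γ 0} : Set (Mink n)) := by
  obtain ⟨hlip, hae⟩ := hγ
  obtain ⟨K, hK⟩ := hlip 0 1 (subset_refl _)
  set c := (γ 0).2 with hc
  set g : ℝ → ℝ := fun s => (γ s).1 - ‖(γ s).2 - c‖ with hgdef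
  have hg : ∀ x, g x = (γ x).1 - ‖(γ x).2 - c‖ := fun x => rfl
  have hKnn : (0:ℝ) ≤ 2 * K := by positivity
  -- Lipschitz estimate for g
  have hgl : ∀ x ∈ Icc (0:ℝ) 1, ∀ y ∈ Icc (0:ℝ) 1, |g x - g y| ≤ (2 * K) * |x - y| := by
    intro x hx y hy
    have hd : dist (γ x) (γ y) ≤ K * dist x y := hK.dist_le_mul x hx y hy
    rw [dist_eq_norm, Real.dist_eq] at hd
    have hfst : |(γ x).1 - (γ y).1| ≤ ‖γ x - γ y‖ := by
      have := norm_fst_le (γ x - γ y)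
      simpa [Real.norm_eq_abs] using this
    have hsnd : |‖(γ x).2 - c‖ - ‖(γ y).2 - c‖| ≤ ‖γ x - γ y‖ := by
      have h5 := abs_norm_sub_norm_le ((γ x).2 - c) ((γ y).2 - c)
      rw [sub_sub_sub_cancel_right] at h5
      exact h5.trans (norm_snd_le (γ x - γ y))
    have h6 : |g x - g y| ≤ |(γ x).1 - (γ y).1| + |‖(γ x).2 - c‖ - ‖(γ y).2 - c‖| := by
      rw [hg x, hg y]
      have : (γ x).1 - ‖(γ x).2 - c‖ - ((γ y).1 - ‖(γ y).2 - c‖)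
          = ((γ x).1 - (γ y).1) - (‖(γ x).2 - c‖ - ‖(γ y).2 - c‖) := by ring
      rw [this]
      exact abs_sub _ _
    linarith
  -- choose a point with timelike derivative
  have hbad : volume ({s | ¬ ∃ v : Mink n, HasDerivWithinAt γ v (Icc 0 1) s ∧ timelikeFD v}
      ∩ Icc s₁ s₂) = 0 := by
    have := ae_iff.mp ht
    rwa [Measure.restrict_apply' measurableSet_Icc] at this
  have hex : ∃ s ∈ Ico s₁ s₂, ∃ v : Mink n, HasDerivWithinAt γ v (Icc 0 1) s ∧ timelikeFD v := by
    by_contra hcon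
    have hsub : Ico s₁ s₂ ⊆ {s | ¬ ∃ v : Mink n, HasDerivWithinAt γ v (Icc 0 1) s ∧ timelikeFD v}
        ∩ Icc s₁ s₂ := by
      intro s hs
      exact ⟨fun hQ => hcon ⟨s, hs, hQ⟩, hs.1, hs.2.le⟩
    have h0 := measure_mono_null hsub hbad
    rw [Real.volume_Ico] at h0
    exact (ENNReal.ofReal_pos.2 (by linarith)).ne' h0
  obtain ⟨t, ⟨ht1, ht2⟩, v, hvd, hvt⟩ := hex
  have ht0 : (0:ℝ) ≤ t := h1.trans ht1
  have htle : t ≤ 1 := le_trans ht2.le h2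
  have hδpos : 0 < v.1 - ‖v.2‖ := sub_pos.2 hvt
  -- strict increase of g across t
  have hev := deriv_lower hg hvd (show (0:ℝ) < (v.1 - ‖v.2‖) / 2 by positivity)
  have hIoc : Ioc t s₂ ∈ 𝓝[>] t := Ioc_mem_nhdsGT ht2
  obtain ⟨u, huP, hu⟩ := (hev.and (Filter.eventually_of_mem hIoc fun _ h => h)).exists
  have hu01 : u ∈ Icc (0:ℝ) 1 := ⟨le_trans ht0 hu.1.le, hu.2.trans h2⟩
  have hugt : g t < g u := by
    have h5 := huP hu01
    have h7 : 0 < (v.1 - ‖v.2‖ - (v.1 - ‖v.2‖) / 2) * (u - t) :=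
      mul_pos (by linarith) (sub_pos.2 hu.1)
    exact sub_pos.mp (h7.trans_le h5)
  -- monotonicity on subintervals
  have hmono : ∀ a b : ℝ, 0 ≤ a → a ≤ b → b ≤ 1 → g a ≤ g b := by
    intro a b ha hab hb
    have hsubI : Icc a b ⊆ Icc (0:ℝ) 1 := Icc_subset_Icc ha hb
    have hd1 : ∀ᵐ s ∂(volume.restrict (Ico a b)), ∀ ε : ℝ, 0 < ε →
        ∀ᶠ w in 𝓝[>] s, w ∈ Icc a b → -(ε * (w - s)) ≤ g w - g s := by
      have hres : ∀ᵐ s ∂(volume.restrict (Ico a b)),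
          ∃ w : Mink n, HasDerivWithinAt γ w (Icc 0 1) s ∧ causalFD w :=
        ae_mono (Measure.restrict_mono ((Ico_subset_Icc_self).trans hsubI) le_rfl) hae
      filter_upwards [hres] with s hs ε hε
      obtain ⟨w, hwd, hwc⟩ := hs
      filter_upwards [deriv_lower hg hwd hε, self_mem_nhdsWithin] with x hx hxIoi hxmem
      have h5 := hx (hsubI hxmem)
      have h0 : 0 ≤ w.1 - ‖w.2‖ := sub_nonneg.2 hwc.2
      have hxs : (0:ℝ) ≤ x - s := (sub_pos.2 hxIoi).le
      nlinarith [mul_nonneg h0 hxs]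
    exact key_mono g a b hab (2 * K) hKnn (fun x hx y hy => hgl x (hsubI hx) y (hsubI hy)) hd1
  have hg01 : g 0 < g 1 := by
    have h5 := hmono 0 t le_rfl ht0 htle
    have h6 := hmono u 1 hu01.1 hu01.2 le_rfl
    linarith
  -- the displacement is timelike future-directed
  set Δ : Mink n := γ 1 - γ 0 with hΔ
  have hΔt : timelikeFD Δ := by
    have e0 : g 0 = (γ 0).1 := by rw [hg 0]; simp [hc]
    have e1 : g 1 = (γ 1).1 - ‖(γ 1).2 - c‖ := hg 1
    show ‖Δ.2‖ < Δ.1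
    have h2' : Δ.1 = (γ 1).1 - (γ 0).1 := rfl
    have h3' : Δ.2 = (γ 1).2 - c := rfl
    rw [h2', h3']
    linarith [e0 ▸ e1 ▸ hg01]
  -- the straight segment is a timelike curve
  have hseg : LipschitzWith ‖Δ‖₊ (fun s : ℝ => γ 0 + s • Δ) := by
    apply LipschitzWith.of_dist_le_mul
    intro x y
    rw [dist_eq_norm, Real.dist_eq, add_sub_add_left_eq_sub, ← sub_smul, norm_smul,
      Real.norm_eq_abs, coe_nnnorm, mul_comm]
  have hder : ∀ s : ℝ, HasDerivAt (fun s : ℝ => γ 0 + s • Δ) Δ s := by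
    intro s
    have h5 : HasDerivAt (fun s : ℝ => s • Δ) ((1:ℝ) • Δ) s := (hasDerivAt_id s).smul_const Δ
    rw [one_smul] at h5
    exact h5.const_add (γ 0)
  refine ⟨γ 0, rfl, 0, 1, fun s : ℝ => γ 0 + s • Δ, one_pos, ⟨?_, ?_⟩, ?_, ?_⟩
  · intro a b _
    exact ⟨‖Δ‖₊, hseg.lipschitzOnWith⟩
  · exact Filter.Eventually.of_forall fun s =>
      ⟨Δ, (hder s).hasDerivWithinAt, hΔt⟩
  · simp
  · show γ 0 + (1:ℝ) • Δ = γ 1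
    rw [one_smul, hΔ, add_sub_cancel]
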